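/- Let F : [0,∞) → ℝ be monotone nondecreasing, c > 0, and let U, V : [0,∞) → ℝ be continuously differentiable with U(0) = V(0). Assume c·(U(τ) − V(τ)) ≤ F(V'(τ)) − F(U'(τ)) for all τ ≥ 0, and that U', V' ≥ 0. Then U(τ) ≤ V(τ) for all τ ≥ 0. -/
import Mathlib


theorem stmt_8 (F : ℝ → ℝ) (hF : MonotoneOn F (Set.Ici 0))
    (c : ℝ) (hc : 0 < c)
    (U V U' V' : ℝ → ℝ)
    (hU : ∀ τ, HasDerivAt U (U' τ) τ) (hV : ∀ τ, HasDerivAt V (V' τ) τ)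
    (hU'c : Continuous U') (hV'c : Continuous V')
    (hU'0 : ∀ τ, 0 ≤ U' τ) (hV'0 : ∀ τ, 0 ≤ V' τ)
    (h0 : U 0 = V 0)
    (hineq : ∀ τ, 0 ≤ τ → c * (U τ - V τ) ≤ F (V' τ) - F (U' τ)) :
    ∀ τ, 0 ≤ τ → U τ ≤ V τ := by
  intro τ₀ hτ₀
  by_contra hgt
  push_neg at hgt
  set W : ℝ → ℝ := fun τ => U τ - V τ with hW
  have hWderiv : ∀ τ, HasDerivAt W (U' τ - V' τ) τ := fun τ => (hU τ).sub (hV τ)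
  have hWcont : Continuous W := by
    exact (continuous_iff_continuousAt.2 fun τ => (hU τ).continuousAt).sub
      (continuous_iff_continuousAt.2 fun τ => (hV τ).continuousAt)
  have hW0 : W τ₀ > 0 := sub_pos.2 hgt
  set S : Set ℝ := {τ | τ ∈ Set.Icc 0 τ₀ ∧ W τ ≤ 0} with hS
  have hSne : (0 : ℝ) ∈ S := ⟨⟨le_refl 0, hτ₀⟩, by simp [hW, h0]⟩
  have hSbdd : BddAbove S := ⟨τ₀, fun x hx => hx.1.2⟩
  set t : ℝ := sSup S with ht
  have htmem : t ∈ S := by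
    have hclosed : IsClosed S := by
      have : S = Set.Icc 0 τ₀ ∩ W ⁻¹' Set.Iic 0 := by
        ext x; simp [hS, Set.mem_inter_iff, and_comm]
      rw [this]
      exact isClosed_Icc.inter (isClosed_Iic.preimage hWcont)
    exact hclosed.csSup_mem ⟨0, hSne⟩ hSbdd
  have ht0 : 0 ≤ t := le_csSup hSbdd hSne
  have htlt : t < τ₀ := lt_of_le_of_ne htmem.1.2 (by
    intro h; rw [h] at htmem; linarith [htmem.2])
  have hpos : ∀ x ∈ Set.Ioc t τ₀, 0 < W x := by
    intro x hx
    by_contra hle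
    push_neg at hle
    have : x ∈ S := ⟨⟨le_trans ht0 hx.1.le, hx.2⟩, hle⟩
    exact absurd (le_csSup hSbdd this) (not_le.2 hx.1)
  have hderivneg : ∀ x ∈ Set.Ioo t τ₀, deriv W x < 0 := by
    intro x hx
    have hx0 : 0 ≤ x := le_trans ht0 hx.1.le
    have hWx : 0 < W x := hpos x ⟨hx.1, hx.2.le⟩
    have hFlt : F (U' x) < F (V' x) := by
      have h1 := hineq x hx0
      have h2 : 0 < U x - V x := hWx
      nlinarith
    have hUV : U' x < V' x := by
      by_contra hge
      push_neg at hge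
      exact absurd (hF (Set.mem_Ici.2 (hV'0 x)) (Set.mem_Ici.2 (hU'0 x)) hge)
        (not_le.2 hFlt)
    rw [(hWderiv x).deriv]
    linarith
  have hanti : StrictAntiOn W (Set.Icc t τ₀) := by
    apply strictAntiOn_of_deriv_neg (convex_Icc t τ₀) hWcont.continuousOn
    intro x hx
    rw [interior_Icc] at hx
    exact hderivneg x hx
  have : W τ₀ < W t := hanti ⟨le_refl t, htlt.le⟩ ⟨htlt.le, le_refl τ₀⟩ htlt
  linarith [htmem.2]
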